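/- Under (A2.1)–(A2.3), the set C is nonempty and compact, C = cl(int C), C is epi-Lipschitz (at every x ∈ C, after applying an orthogonal matrix, C coincides near x with the epigraph of a Lipschitz continuous function), and C is (η/M_ψ)-prox-regular; in particular, every y ∈ ℝⁿ with d(y, C) < η/M_ψ has a unique nearest point in C. -/

import Mathlib

open MeasureTheory Filter Set Metric Topology
open scoped RealInnerProductSpace

noncomputable section

/-- The proximal normal cone to `S` at `x`. -/
def proxNC {H : Type*} [NormedAddCommGroup H] [InnerProductSpace ℝ H]
    (S : Set H) (x : H) : Set H :=
  {ζ | ∃ σ : ℝ, 0 < σ ∧ ∀ y ∈ S, ⟪ζ, y - x⟫ ≤ σ * ‖y - x‖ ^ 2}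

/-- `S` is `r`-prox-regular: the proximal normal inequality holds with constant `1/(2r)`
for every unit proximal normal. -/
def ProxReg {H : Type*} [NormedAddCommGroup H] [InnerProductSpace ℝ H]
    (r : ℝ) (S : Set H) : Prop :=
  ∀ x ∈ S, ∀ ζ ∈ proxNC S x, ‖ζ‖ = 1 →
    ∀ y ∈ S, ⟪ζ, y - x⟫ ≤ (1 / (2 * r)) * ‖y - x‖ ^ 2

/-- `C` is epi-Lipschitz at `x`: after a rotation sending the unit vector `d` to the
"vertical" direction, `C` coincides near `x` with the epigraph of a Lipschitz function `g`
of the orthogonal component. -/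
def EpiLipschitzAt {H : Type*} [NormedAddCommGroup H] [InnerProductSpace ℝ H]
    (C : Set H) (x : H) : Prop :=
  ∃ d : H, ‖d‖ = 1 ∧ ∃ (L : NNReal) (g : H → ℝ) (ε : ℝ), 0 < ε ∧ LipschitzWith L g ∧
    ∀ y ∈ Metric.ball x ε, (y ∈ C ↔ g (y - ⟪y, d⟫ • d) ≤ ⟪y, d⟫)

variable {H : Type*} [NormedAddCommGroup H] [InnerProductSpace ℝ H] [CompleteSpace H]

set_option linter.unusedSectionVars false
set_option linter.unusedVariables false

lemma stmt1_comp_le {f g f' g' : ℝ → ℝ} {a b : ℝ} (hab : a ≤ b)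
    (hf : ∀ t ∈ Icc a b, HasDerivAt f (f' t) t)
    (hg : ∀ t ∈ Icc a b, HasDerivAt g (g' t) t)
    (hle : ∀ t ∈ Icc a b, f' t ≤ g' t) (h0 : f a ≤ g a) : f b ≤ g b := by
  have key : MonotoneOn (fun t => g t - f t) (Icc a b) := by
    apply monotoneOn_of_deriv_nonneg (convex_Icc a b)
    · exact fun t ht => (((hg t ht).sub (hf t ht)).continuousAt).continuousWithinAt
    · intro t ht
      rw [interior_Icc] at ht
      exact (((hg t (Ioo_subset_Icc_self ht)).sub
        (hf t (Ioo_subset_Icc_self ht))).differentiableAt).differentiableWithinAt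
    · intro t ht
      rw [interior_Icc] at ht
      rw [show (fun t => g t - f t) = g - f from rfl,
        ((hg t (Ioo_subset_Icc_self ht)).sub (hf t (Ioo_subset_Icc_self ht))).deriv]
      linarith [hle t (Ioo_subset_Icc_self ht)]
  have := key (left_mem_Icc.2 hab) (right_mem_Icc.2 hab) hab
  simp only at this
  linarith

lemma stmt1_line_deriv {ψ : H → ℝ} {ψ' : H → H} {z v : H} {t : ℝ}
    (h : HasGradientAt ψ (ψ' (z + t • v)) (z + t • v)) :
    HasDerivAt (fun s : ℝ => ψ (z + s • v)) ⟪ψ' (z + t • v), v⟫ t := by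
  have hline : HasDerivAt (fun s : ℝ => z + s • v) v t := by
    simpa using ((hasDerivAt_id t).smul_const v).const_add z
  have := h.hasFDerivAt.comp_hasDerivAt t hline
  simpa [InnerProductSpace.toDual_apply_apply, Function.comp_def] using this

lemma stmt1_proj_le {d v : H} (hd : ‖d‖ = 1) : ‖v - ⟪v, d⟫ • d‖ ≤ ‖v‖ := by
  have h1 : ‖v - ⟪v, d⟫ • d‖ ^ 2 = ‖v‖ ^ 2 - ⟪v, d⟫ ^ 2 := by
    rw [norm_sub_sq_real, real_inner_smul_right, norm_smul]
    simp [hd, abs_sq]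
    ring
  nlinarith [norm_nonneg (v - ⟪v, d⟫ • d), norm_nonneg v, sq_nonneg (⟪v, d⟫)]

lemma stmt1_poly_deriv (c A : ℝ) (t : ℝ) :
    HasDerivAt (fun s : ℝ => c * s + A * s ^ 2) (c + A * (2 * t)) t := by
  have h1 : HasDerivAt (fun s : ℝ => c * s) c t := by
    simpa using (hasDerivAt_id t).const_mul c
  have h2 : HasDerivAt (fun s : ℝ => A * s ^ 2) (A * (2 * t)) t := by
    simpa [pow_one] using (hasDerivAt_pow 2 t).const_mul A
  exact h1.add h2


set_option maxHeartbeats 2000000 in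
/-- Under (A2.1)–(A2.3), `C = {ψ ≤ 0}` is nonempty and compact,
`C = cl (int C)`, `C` is epi-Lipschitz, and `C` is `(η/Mψ)`-prox-regular; in particular every
point at distance `< η/Mψ` from `C` has a unique nearest point in `C`. -/
theorem stmt_1 {n : ℕ} (hn : 0 < n)
    (ψ : EuclideanSpace ℝ (Fin n) → ℝ)
    (ψ' : EuclideanSpace ℝ (Fin n) → EuclideanSpace ℝ (Fin n))
    (ρ η Mψbar Mψ : ℝ) (hρ : 0 < ρ) (hη : 0 < η)
    (hne : ({x : EuclideanSpace ℝ (Fin n) | ψ x ≤ 0}).Nonempty)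
    -- (A2.1): ψ is C¹ with locally Lipschitz gradient on C + ρB
    (hψd : ∀ x ∈ Metric.thickening ρ {x : EuclideanSpace ℝ (Fin n) | ψ x ≤ 0},
      HasGradientAt ψ (ψ' x) x)
    (hψc : ContinuousOn ψ' (Metric.thickening ρ {x : EuclideanSpace ℝ (Fin n) | ψ x ≤ 0}))
    (hψloclip : ∀ x ∈ Metric.thickening ρ {x : EuclideanSpace ℝ (Fin n) | ψ x ≤ 0},
      ∃ K : NNReal, ∃ s ∈ nhdsWithin x (Metric.thickening ρ {x : EuclideanSpace ℝ (Fin n) | ψ x ≤ 0}),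
        LipschitzOnWith K ψ' s)
    -- (A2.2)
    (hgrad : ∀ x, ψ x = 0 → 2 * η < ‖ψ' x‖)
    -- (A2.3): coercivity
    (hcoer : ∀ Mc : ℝ, ∃ R : ℝ, ∀ x : EuclideanSpace ℝ (Fin n), R ≤ ‖x‖ → Mc ≤ ψ x)
    -- the constants M̄ψ and Mψ
    (hMψbar : ∀ x, ψ x ≤ 0 → ‖ψ' x‖ ≤ Mψbar)
    (hMψlip : LipschitzOnWith (Real.toNNReal (2 * Mψ)) ψ'
      (Metric.cthickening (ρ / 2) {x : EuclideanSpace ℝ (Fin n) | ψ x ≤ 0}))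
    (hMψ : 4 * η / ρ ≤ Mψ) :
    ({x : EuclideanSpace ℝ (Fin n) | ψ x ≤ 0}).Nonempty ∧
    IsCompact {x : EuclideanSpace ℝ (Fin n) | ψ x ≤ 0} ∧
    {x : EuclideanSpace ℝ (Fin n) | ψ x ≤ 0}
      = closure (interior {x : EuclideanSpace ℝ (Fin n) | ψ x ≤ 0}) ∧
    (∀ x ∈ {x : EuclideanSpace ℝ (Fin n) | ψ x ≤ 0},
      EpiLipschitzAt {x : EuclideanSpace ℝ (Fin n) | ψ x ≤ 0} x) ∧
    ProxReg (η / Mψ) {x : EuclideanSpace ℝ (Fin n) | ψ x ≤ 0} ∧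
    ∀ y : EuclideanSpace ℝ (Fin n),
      Metric.infDist y {x : EuclideanSpace ℝ (Fin n) | ψ x ≤ 0} < η / Mψ →
      ∃! c, c ∈ {x : EuclideanSpace ℝ (Fin n) | ψ x ≤ 0} ∧
        dist y c = Metric.infDist y {x : EuclideanSpace ℝ (Fin n) | ψ x ≤ 0} := by
  set C := {x : EuclideanSpace ℝ (Fin n) | ψ x ≤ 0} with hCdef
  set U := Metric.thickening ρ C with hUdef
  have hUopen : IsOpen U := isOpen_thickening
  have hCU : C ⊆ U := self_subset_thickening hρ C
  have hcont : ∀ x ∈ U, ContinuousAt ψ x := fun x hx => (hψd x hx).hasFDerivAt.continuousAt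
  have hMψpos : 0 < Mψ := lt_of_lt_of_le (by positivity) hMψ
  -- closedness
  have hclosed : IsClosed C := by
    rw [← closure_subset_iff_isClosed]
    intro x hx
    have hxU : x ∈ U := by
      rcases Metric.mem_closure_iff.1 hx ρ hρ with ⟨y, hyC, hy⟩
      exact mem_thickening_iff.2 ⟨y, hyC, hy⟩
    by_contra h
    have h0 : 0 < ψ x := not_le.1 h
    have hnb : ψ ⁻¹' Ioi 0 ∈ 𝓝 x := (hcont x hxU) (Ioi_mem_nhds h0)
    rcases mem_closure_iff_nhds.1 hx _ hnb with ⟨y, hy1, hy2⟩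
    exact absurd (show ψ y ≤ 0 from hy2) (not_le.2 hy1)
  -- compactness
  have hcpt : IsCompact C := by
    obtain ⟨R, hR⟩ := hcoer 1
    refine (isCompact_closedBall (0 : EuclideanSpace ℝ (Fin n)) |R|).of_isClosed_subset hclosed ?_
    intro x hx
    simp only [mem_closedBall, dist_zero_right]
    by_contra h
    have : R ≤ ‖x‖ := le_trans (le_abs_self R) (le_of_lt (not_le.1 h))
    have hx' : ψ x ≤ 0 := hx
    linarith [hR x this]
  -- Taylor upper bound
  have taylor_ub : ∀ x, ψ x ≤ 0 → ∀ v : EuclideanSpace ℝ (Fin n), ‖v‖ ≤ ρ/2 →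
      ψ (x + v) ≤ ψ x + ⟪ψ' x, v⟫ + Mψ * ‖v‖^2 := by
    intro x hx v hv
    have hvnn : (0:ℝ) ≤ ‖v‖ := norm_nonneg v
    have hsegc : ∀ t ∈ Icc (0:ℝ) 1, x + t • v ∈ Metric.cthickening (ρ/2) C := by
      intro t ht
      refine mem_cthickening_of_dist_le (x + t • v) x (ρ/2) C hx ?_
      rw [dist_eq_norm, add_sub_cancel_left, norm_smul, Real.norm_eq_abs,
        abs_of_nonneg ht.1]
      calc t * ‖v‖ ≤ 1 * ‖v‖ := by nlinarith [ht.2]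
        _ ≤ ρ/2 := by simpa using hv
    have hsegU : ∀ t ∈ Icc (0:ℝ) 1, x + t • v ∈ U :=
      fun t ht => cthickening_subset_thickening' hρ (by linarith) C (hsegc t ht)
    have hf : ∀ t ∈ Icc (0:ℝ) 1,
        HasDerivAt (fun s : ℝ => ψ (x + s • v)) ⟪ψ' (x + t • v), v⟫ t :=
      fun t ht => stmt1_line_deriv (hψd _ (hsegU t ht))
    have hxc : x ∈ Metric.cthickening (ρ/2) C := self_subset_cthickening C hx
    have hlipd : ∀ t ∈ Icc (0:ℝ) 1, ‖ψ' (x + t • v) - ψ' x‖ ≤ 2 * Mψ * (t * ‖v‖) := by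
      intro t ht
      have := hMψlip.dist_le_mul _ (hsegc t ht) x hxc
      rw [dist_eq_norm, dist_eq_norm, add_sub_cancel_left, norm_smul, Real.norm_eq_abs,
        abs_of_nonneg ht.1] at this
      rwa [Real.coe_toNNReal _ (by positivity)] at this
    have hle : ∀ t ∈ Icc (0:ℝ) 1,
        ⟪ψ' (x + t • v), v⟫ ≤ ⟪ψ' x, v⟫ + (Mψ * ‖v‖^2) * (2 * t) := by
      intro t ht
      have h1 : ⟪ψ' (x + t • v) - ψ' x, v⟫ ≤ ‖ψ' (x + t • v) - ψ' x‖ * ‖v‖ :=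
        real_inner_le_norm _ _
      rw [inner_sub_left] at h1
      have h2 := hlipd t ht
      nlinarith [ht.1, mul_le_mul_of_nonneg_right h2 hvnn]
    have := stmt1_comp_le (f := fun s : ℝ => ψ (x + s • v))
      (g := fun s : ℝ => ψ x + (⟪ψ' x, v⟫ * s + (Mψ * ‖v‖^2) * s^2))
      (f' := fun t => ⟪ψ' (x + t • v), v⟫)
      (g' := fun t => ⟪ψ' x, v⟫ + (Mψ * ‖v‖^2) * (2 * t))
      (by norm_num) hf
      (fun t _ => ((stmt1_poly_deriv (⟪ψ' x, v⟫) (Mψ * ‖v‖^2) t).const_add (ψ x)))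
      hle (by simp)
    simp only [one_smul, mul_one, one_pow] at this
    linarith
  have taylor_lb : ∀ x, ψ x ≤ 0 → ∀ v : EuclideanSpace ℝ (Fin n), ‖v‖ ≤ ρ/2 →
      ψ x + ⟪ψ' x, v⟫ - Mψ * ‖v‖^2 ≤ ψ (x + v) := by
    intro x hx v hv
    have hvnn : (0:ℝ) ≤ ‖v‖ := norm_nonneg v
    have hsegc : ∀ t ∈ Icc (0:ℝ) 1, x + t • v ∈ Metric.cthickening (ρ/2) C := by
      intro t ht
      refine mem_cthickening_of_dist_le (x + t • v) x (ρ/2) C hx ?_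
      rw [dist_eq_norm, add_sub_cancel_left, norm_smul, Real.norm_eq_abs,
        abs_of_nonneg ht.1]
      calc t * ‖v‖ ≤ 1 * ‖v‖ := by nlinarith [ht.2]
        _ ≤ ρ/2 := by simpa using hv
    have hsegU : ∀ t ∈ Icc (0:ℝ) 1, x + t • v ∈ U :=
      fun t ht => cthickening_subset_thickening' hρ (by linarith) C (hsegc t ht)
    have hf : ∀ t ∈ Icc (0:ℝ) 1,
        HasDerivAt (fun s : ℝ => ψ (x + s • v)) ⟪ψ' (x + t • v), v⟫ t :=
      fun t ht => stmt1_line_deriv (hψd _ (hsegU t ht))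
    have hxc : x ∈ Metric.cthickening (ρ/2) C := self_subset_cthickening C hx
    have hlipd : ∀ t ∈ Icc (0:ℝ) 1, ‖ψ' (x + t • v) - ψ' x‖ ≤ 2 * Mψ * (t * ‖v‖) := by
      intro t ht
      have := hMψlip.dist_le_mul _ (hsegc t ht) x hxc
      rw [dist_eq_norm, dist_eq_norm, add_sub_cancel_left, norm_smul, Real.norm_eq_abs,
        abs_of_nonneg ht.1] at this
      rwa [Real.coe_toNNReal _ (by positivity)] at this
    have hle : ∀ t ∈ Icc (0:ℝ) 1,
        ⟪ψ' x, v⟫ + (-(Mψ * ‖v‖^2)) * (2 * t) ≤ ⟪ψ' (x + t • v), v⟫ := by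
      intro t ht
      have h1 : ⟪ψ' x - ψ' (x + t • v), v⟫ ≤ ‖ψ' x - ψ' (x + t • v)‖ * ‖v‖ :=
        real_inner_le_norm _ _
      rw [inner_sub_left] at h1
      rw [norm_sub_rev] at h1
      have h2 := hlipd t ht
      nlinarith [ht.1, mul_le_mul_of_nonneg_right h2 hvnn]
    have := stmt1_comp_le
      (f := fun s : ℝ => ψ x + (⟪ψ' x, v⟫ * s + (-(Mψ * ‖v‖^2)) * s^2))
      (g := fun s : ℝ => ψ (x + s • v))
      (f' := fun t => ⟪ψ' x, v⟫ + (-(Mψ * ‖v‖^2)) * (2 * t))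
      (g' := fun t => ⟪ψ' (x + t • v), v⟫)
      (by norm_num)
      (fun t _ => ((stmt1_poly_deriv (⟪ψ' x, v⟫) (-(Mψ * ‖v‖^2)) t).const_add (ψ x)))
      hf hle (by simp)
    simp only [one_smul, mul_one, one_pow] at this
    linarith
  -- decrease lemma
  have hdec : ∀ (d : EuclideanSpace ℝ (Fin n)) (x₀ : EuclideanSpace ℝ (Fin n)) (ε₁ : ℝ),
      ball x₀ ε₁ ⊆ U → (∀ w ∈ ball x₀ ε₁, ⟪ψ' w, d⟫ ≤ -η) →
      ∀ (z : EuclideanSpace ℝ (Fin n)) (a b : ℝ), a ≤ b →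
      (∀ t ∈ Icc a b, z + t • d ∈ ball x₀ ε₁) →
      ψ (z + b • d) ≤ ψ (z + a • d) - η * (b - a) := by
    intro d x₀ ε₁ hbU hkey z a b hab hmem
    have hf : ∀ t ∈ Icc a b,
        HasDerivAt (fun s : ℝ => ψ (z + s • d)) ⟪ψ' (z + t • d), d⟫ t :=
      fun t ht => stmt1_line_deriv (hψd _ (hbU (hmem t ht)))
    have := stmt1_comp_le
      (f := fun s : ℝ => ψ (z + s • d))
      (g := fun s : ℝ => ψ (z + a • d) - η * (s - a))
      (f' := fun t => ⟪ψ' (z + t • d), d⟫)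
      (g' := fun _ => -η)
      hab hf
      (fun t _ => by
        have h1 : HasDerivAt (fun s : ℝ => ψ (z + a • d) - η * (s - a)) (0 - η * 1) t :=
          (hasDerivAt_const t (ψ (z + a • d))).sub
            (((hasDerivAt_id t).sub_const a).const_mul η)
        simpa using h1)
      (fun t ht => hkey _ (hmem t ht)) (by simp)
    simpa using this
  -- boundary structure
  have hbd : ∀ x₀, ψ x₀ = 0 → ∃ d : EuclideanSpace ℝ (Fin n), ‖d‖ = 1 ∧
      ∃ ε₁ > 0, ball x₀ ε₁ ⊆ U ∧
      (∀ z ∈ ball x₀ ε₁, ⟪ψ' z, d⟫ ≤ -η) ∧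
      (∀ z ∈ ball x₀ ε₁, ‖ψ' z‖ ≤ ‖ψ' x₀‖ + η) := by
    intro x₀ hx₀
    have hx₀C : x₀ ∈ C := le_of_eq hx₀
    have hx₀U : x₀ ∈ U := hCU hx₀C
    have hG : 2 * η < ‖ψ' x₀‖ := hgrad x₀ hx₀
    have hGpos : 0 < ‖ψ' x₀‖ := by linarith
    refine ⟨-(‖ψ' x₀‖⁻¹ • ψ' x₀), ?_, ?_⟩
    · rw [norm_neg, norm_smul, Real.norm_eq_abs, abs_of_nonneg (by positivity)]
      field_simp
    · have hcAt : ContinuousAt ψ' x₀ := hψc.continuousAt (hUopen.mem_nhds hx₀U)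
      obtain ⟨ε₂, hε₂pos, hε₂⟩ := Metric.continuousAt_iff.1 hcAt η hη
      refine ⟨min ε₂ ρ, lt_min hε₂pos hρ, ?_, ?_, ?_⟩
      · intro z hz
        exact mem_thickening_iff.2 ⟨x₀, hx₀C, lt_of_lt_of_le hz (min_le_right _ _)⟩
      · intro z hz
        have hd : dist (ψ' z) (ψ' x₀) < η :=
          hε₂ (lt_of_lt_of_le hz (min_le_left _ _))
        rw [dist_eq_norm] at hd
        have h1 : ⟪ψ' x₀, -(‖ψ' x₀‖⁻¹ • ψ' x₀)⟫ = -‖ψ' x₀‖ := by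
          rw [inner_neg_right, real_inner_smul_right, real_inner_self_eq_norm_sq]
          field_simp
        have h2 : ⟪ψ' z - ψ' x₀, -(‖ψ' x₀‖⁻¹ • ψ' x₀)⟫ ≤ η := by
          have := real_inner_le_norm (ψ' z - ψ' x₀) (-(‖ψ' x₀‖⁻¹ • ψ' x₀))
          have hn1 : ‖-(‖ψ' x₀‖⁻¹ • ψ' x₀)‖ = 1 := by
            rw [norm_neg, norm_smul, Real.norm_eq_abs, abs_of_nonneg (by positivity)]
            field_simp
          rw [hn1, mul_one] at this
          linarith
        have h3 : ⟪ψ' z, -(‖ψ' x₀‖⁻¹ • ψ' x₀)⟫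
            = ⟪ψ' x₀, -(‖ψ' x₀‖⁻¹ • ψ' x₀)⟫ + ⟪ψ' z - ψ' x₀, -(‖ψ' x₀‖⁻¹ • ψ' x₀)⟫ := by
          rw [inner_sub_left]; ring
        rw [h3, h1]
        linarith
      · intro z hz
        have hd : dist (ψ' z) (ψ' x₀) < η :=
          hε₂ (lt_of_lt_of_le hz (min_le_left _ _))
        rw [dist_eq_norm] at hd
        calc ‖ψ' z‖ = ‖ψ' x₀ + (ψ' z - ψ' x₀)‖ := by congr 1; abel
          _ ≤ ‖ψ' x₀‖ + ‖ψ' z - ψ' x₀‖ := norm_add_le _ _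
          _ ≤ ‖ψ' x₀‖ + η := by linarith
  -- interior characterization
  have hint : ∀ w ∈ U, ψ w < 0 → w ∈ interior C := by
    intro w hw hlt
    rw [mem_interior_iff_mem_nhds]
    exact mem_of_superset ((hcont w hw) (Iio_mem_nhds hlt)) (fun y hy => show ψ y ≤ 0 from le_of_lt hy)
  -- closure of interior
  have hclint : C = closure (interior C) := by
    refine Subset.antisymm ?_ (closure_minimal interior_subset hclosed)
    intro x hx
    have hxC : ψ x ≤ 0 := hx
    rcases lt_or_eq_of_le hxC with hlt | heq
    · exact subset_closure (hint x (hCU hx) hlt)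
    · obtain ⟨d, hd1, ε₁, hε₁pos, hbU, hkey, -⟩ := hbd x heq
      have htend : Tendsto (fun t : ℝ => x + t • d) (𝓝[>] 0) (𝓝 x) := by
        have h1 : Tendsto (fun t : ℝ => x + t • d) (𝓝 0) (𝓝 x) := by
          have : Continuous (fun t : ℝ => x + t • d) :=
            continuous_const.add (continuous_id.smul continuous_const)
          simpa using this.tendsto 0
        exact h1.mono_left nhdsWithin_le_nhds
      refine mem_closure_of_tendsto htend ?_
      filter_upwards [Ioo_mem_nhdsGT_of_mem (Set.left_mem_Ico.2 hε₁pos)] with t ht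
      have hmem : ∀ s ∈ Icc (0:ℝ) t, x + s • d ∈ ball x ε₁ := by
        intro s hs
        rw [mem_ball, dist_eq_norm, add_sub_cancel_left, norm_smul, Real.norm_eq_abs,
          abs_of_nonneg hs.1, hd1, mul_one]
        exact lt_of_le_of_lt hs.2 ht.2
      have hψt := hdec d x ε₁ hbU hkey x 0 t (le_of_lt ht.1) hmem
      simp only [zero_smul, add_zero, heq] at hψt
      have hψneg : ψ (x + t • d) < 0 := by nlinarith [ht.1]
      exact hint _ (hbU (hmem t ⟨le_of_lt ht.1, le_refl t⟩)) hψneg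
  -- every unit proximal normal is at a boundary point and equals the normalized gradient
  have hnormal : ∀ x ∈ C, ∀ ζ ∈ proxNC C x, ‖ζ‖ = 1 →
      ψ x = 0 ∧ ζ = ‖ψ' x‖⁻¹ • ψ' x := by
    intro x hxC ζ hζ hζ1
    obtain ⟨σ, hσpos, hσ⟩ := hζ
    -- step A : x is a boundary point
    have hxb : ψ x = 0 := by
      by_contra h
      have hlt : ψ x < 0 := lt_of_le_of_ne hxC h
      have hxint := hint x (hCU hxC) hlt
      obtain ⟨ε, hεpos, hball⟩ := Metric.isOpen_iff.1 isOpen_interior x hxint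
      set t := min (ε/2) (1/(2*σ)) with htdef
      have htpos : 0 < t := lt_min (by linarith) (by positivity)
      have hyC : x + t • ζ ∈ C := by
        refine interior_subset (hball ?_)
        rw [mem_ball, dist_eq_norm, add_sub_cancel_left, norm_smul, Real.norm_eq_abs,
          abs_of_nonneg (le_of_lt htpos), hζ1, mul_one]
        exact lt_of_le_of_lt (min_le_left _ _) (by linarith)
      have := hσ _ hyC
      rw [add_sub_cancel_left, real_inner_smul_right, real_inner_self_eq_norm_sq, hζ1,
        norm_smul, Real.norm_eq_abs, abs_of_nonneg (le_of_lt htpos), hζ1] at this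
      have ht2 : t ≤ 1/(2*σ) := min_le_right _ _
      have hA : t ≤ σ * t ^ 2 := by nlinarith [this]
      have hB : 1 ≤ σ * t := le_of_mul_le_mul_right (by nlinarith [hA]) htpos
      have hC : σ * t ≤ 1/2 := by
        have := mul_le_mul_of_nonneg_left ht2 hσpos.le
        have heq2 : σ * (1/(2*σ)) = 1/2 := by field_simp
        linarith
      linarith
    have hG : 2 * η < ‖ψ' x‖ := hgrad x hxb
    have hGpos : 0 < ‖ψ' x‖ := by linarith
    refine ⟨hxb, ?_⟩
    -- step B : half-space property
    have hhalf : ∀ v : EuclideanSpace ℝ (Fin n), ⟪ψ' x, v⟫ < 0 → ⟪ζ, v⟫ ≤ 0 := by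
      intro v hv
      have hvne : v ≠ 0 := by
        intro h; rw [h, inner_zero_right] at hv; linarith
      have hvpos : 0 < ‖v‖ := norm_pos_iff.2 hvne
      set c := -⟪ψ' x, v⟫ with hcdef
      have hcpos : 0 < c := by rw [hcdef]; linarith
      set t₁ := min (ρ/(2*‖v‖)) (c/(Mψ*‖v‖^2)) with ht₁def
      have ht₁pos : 0 < t₁ := lt_min (by positivity) (by positivity)
      have hsmall : ∀ t : ℝ, 0 < t → t ≤ t₁ → x + t • v ∈ C := by
        intro t htpos htle
        have h1 : ‖t • v‖ ≤ ρ/2 := by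
          rw [norm_smul, Real.norm_eq_abs, abs_of_nonneg (le_of_lt htpos)]
          have : t ≤ ρ/(2*‖v‖) := le_trans htle (min_le_left _ _)
          rw [le_div_iff₀ (by positivity)] at this
          linarith
        have h2 := taylor_ub x hxC (t • v) h1
        rw [real_inner_smul_right, norm_smul, Real.norm_eq_abs,
          abs_of_nonneg (le_of_lt htpos)] at h2
        have h3 : t ≤ c/(Mψ*‖v‖^2) := le_trans htle (min_le_right _ _)
        rw [le_div_iff₀ (by positivity)] at h3
        have : ψ (x + t • v) ≤ 0 := by
          rw [hxb] at h2
          have : t * ⟪ψ' x, v⟫ + Mψ * (t * ‖v‖)^2 ≤ 0 := by nlinarith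
          nlinarith
        exact this
      have hboundt : ∀ t : ℝ, 0 < t → t ≤ t₁ → ⟪ζ, v⟫ ≤ σ * t * ‖v‖^2 := by
        intro t htpos htle
        have := hσ _ (hsmall t htpos htle)
        rw [add_sub_cancel_left, real_inner_smul_right, norm_smul, Real.norm_eq_abs,
          abs_of_nonneg (le_of_lt htpos)] at this
        have h4 : t * ⟪ζ, v⟫ ≤ σ * (t^2 * ‖v‖^2) := by nlinarith
        have := (mul_le_mul_iff_right₀ htpos).1 (by nlinarith : t * ⟪ζ, v⟫ ≤ t * (σ * t * ‖v‖^2))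
        linarith
      refine le_of_forall_pos_le_add ?_
      intro ε hε
      set t := min t₁ (ε/(σ*‖v‖^2)) with htdef
      have htpos : 0 < t := lt_min ht₁pos (by positivity)
      have h5 := hboundt t htpos (min_le_left _ _)
      have h6 : t ≤ ε/(σ*‖v‖^2) := min_le_right _ _
      rw [le_div_iff₀ (by positivity)] at h6
      nlinarith
    -- extend to the closed half-space
    have hhalf' : ∀ v : EuclideanSpace ℝ (Fin n), ⟪ψ' x, v⟫ ≤ 0 → ⟪ζ, v⟫ ≤ 0 := by
      intro v hv
      refine le_of_forall_pos_le_add ?_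
      intro ε hε
      set ε' := ε/(|⟪ζ, ψ' x⟫|+1) with hε'def
      have hε'pos : 0 < ε' := by positivity
      have h1 : ⟪ψ' x, v - ε' • ψ' x⟫ < 0 := by
        rw [inner_sub_right, real_inner_smul_right, real_inner_self_eq_norm_sq]
        nlinarith [mul_pos hε'pos (pow_pos hGpos 2)]
      have h2 := hhalf _ h1
      rw [inner_sub_right, real_inner_smul_right] at h2
      have h3 : ε' * ⟪ζ, ψ' x⟫ ≤ ε' * (|⟪ζ, ψ' x⟫|+1) := by
        have := le_abs_self (⟪ζ, ψ' x⟫)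
        nlinarith
      have h4 : ε' * (|⟪ζ, ψ' x⟫|+1) = ε := by
        rw [hε'def]; field_simp
      linarith
    -- conclude ζ = normalized gradient
    set u := ‖ψ' x‖⁻¹ • ψ' x with hudef
    have hu1 : ‖u‖ = 1 := by
      rw [hudef, norm_smul, Real.norm_eq_abs, abs_of_nonneg (by positivity)]
      field_simp
    have hζG : 0 ≤ ⟪ζ, ψ' x⟫ := by
      have h1 : ⟪ψ' x, -(ψ' x)⟫ ≤ 0 := by
        rw [inner_neg_right, real_inner_self_eq_norm_sq]; nlinarith
      have := hhalf' _ h1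
      rw [inner_neg_right] at this
      linarith
    have hζu : ⟪ζ, u⟫ = ‖ψ' x‖⁻¹ * ⟪ζ, ψ' x⟫ := by
      rw [hudef, real_inner_smul_right]
    have hGu : ⟪ψ' x, u⟫ = ‖ψ' x‖ := by
      rw [hudef, real_inner_smul_right, real_inner_self_eq_norm_sq]
      field_simp
    set w := ζ - ⟪ζ, u⟫ • u with hwdef
    have hGw : ⟪ψ' x, w⟫ = 0 := by
      rw [hwdef, inner_sub_right, real_inner_smul_right, hGu, hζu, real_inner_comm]
      field_simp
      ring
    have hζw : ⟪ζ, w⟫ = 0 := by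
      have h1 := hhalf' w (le_of_eq hGw)
      have h2 := hhalf' (-w) (by rw [inner_neg_right, hGw]; simp)
      rw [inner_neg_right] at h2
      linarith
    have hζunn : 0 ≤ ⟪ζ, u⟫ := by
      rw [hζu]
      positivity
    have hζu1 : ⟪ζ, u⟫ = 1 := by
      have h1 : ⟪ζ, w⟫ = ‖ζ‖^2 - ⟪ζ, u⟫^2 := by
        rw [hwdef, inner_sub_right, real_inner_smul_right, real_inner_self_eq_norm_sq]
        ring
      have h2 : ⟪ζ, u⟫^2 = 1 := by
        rw [hζw, hζ1] at h1
        nlinarith [h1]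
      have h3 : (⟪ζ, u⟫ - 1) * (⟪ζ, u⟫ + 1) = 0 := by linear_combination h2
      rcases mul_eq_zero.1 h3 with h | h
      · linarith
      · linarith
    have hnz : ‖ζ - u‖^2 = 0 := by
      rw [norm_sub_sq_real, hζ1, hu1, hζu1]
      norm_num
    have := sub_eq_zero.1 (norm_eq_zero.1 ((pow_eq_zero_iff (n := 2) (by norm_num)).1 hnz))
    rw [hudef] at this
    exact this
  -- prox-regularity
  have hprox : ProxReg (η / Mψ) C := by
    intro x hxC ζ hζ hζ1 y hyC
    obtain ⟨hxb, hζeq⟩ := hnormal x hxC ζ hζ hζ1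
    have hG : 2 * η < ‖ψ' x‖ := hgrad x hxb
    have hGpos : 0 < ‖ψ' x‖ := by linarith
    have hrr : 1 / (2 * (η / Mψ)) = Mψ / (2 * η) := by
      field_simp
    rw [hrr]
    by_cases hcase : ‖y - x‖ ≤ ρ/2
    · have h1 := taylor_lb x hxC (y - x) hcase
      have hxy : x + (y - x) = y := by abel
      rw [hxy, hxb] at h1
      have hy0 : ψ y ≤ 0 := hyC
      have h2 : ⟪ψ' x, y - x⟫ ≤ Mψ * ‖y - x‖^2 := by linarith
      rw [hζeq, real_inner_smul_left]
      have h4 : ‖ψ' x‖⁻¹ ≤ (2*η)⁻¹ := by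
        apply inv_anti₀ (by positivity) hG.le
      calc ‖ψ' x‖⁻¹ * ⟪ψ' x, y - x⟫ ≤ ‖ψ' x‖⁻¹ * (Mψ * ‖y - x‖^2) :=
            mul_le_mul_of_nonneg_left h2 (by positivity)
        _ ≤ (2*η)⁻¹ * (Mψ * ‖y - x‖^2) :=
            mul_le_mul_of_nonneg_right h4 (by positivity)
        _ = Mψ/(2*η) * ‖y - x‖^2 := by ring
    · push_neg at hcase
      have h1 : ⟪ζ, y - x⟫ ≤ ‖y - x‖ := by
        have := real_inner_le_norm ζ (y - x)
        rw [hζ1, one_mul] at this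
        exact this
      have h4 : 4*η ≤ Mψ * ρ := by
        rw [div_le_iff₀ hρ] at hMψ
        linarith
      have h3 : 1 ≤ Mψ/(2*η) * ‖y - x‖ := by
        rw [div_mul_eq_mul_div, le_div_iff₀ (by positivity)]
        nlinarith
      calc ⟪ζ, y - x⟫ ≤ ‖y - x‖ := h1
        _ = 1 * ‖y - x‖ := (one_mul _).symm
        _ ≤ (Mψ/(2*η) * ‖y - x‖) * ‖y - x‖ :=
            mul_le_mul_of_nonneg_right h3 (norm_nonneg _)
        _ = Mψ/(2*η) * ‖y - x‖^2 := by ring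
  -- unique nearest point
  have hnear : ∀ y : EuclideanSpace ℝ (Fin n), infDist y C < η / Mψ →
      ∃! c, c ∈ C ∧ dist y c = infDist y C := by
    intro y hy
    obtain ⟨c₀, hc₀C, hc₀d⟩ := hcpt.exists_infDist_eq_dist hne y
    by_cases hyC : y ∈ C
    · refine ⟨y, ⟨hyC, by simp [infDist_zero_of_mem hyC]⟩, ?_⟩
      rintro c ⟨hcC, hcd⟩
      rw [infDist_zero_of_mem hyC] at hcd
      exact (dist_eq_zero.1 hcd).symm
    · set t := infDist y C with htdef
      have htnn : 0 ≤ t := infDist_nonneg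
      have htpos : 0 < t := by
        rcases eq_or_lt_of_le htnn with h | h
        · exfalso
          exact hyC ((hclosed.mem_iff_infDist_zero hne).2 h.symm)
        · exact h
      refine ⟨c₀, ⟨hc₀C, hc₀d.symm⟩, ?_⟩
      rintro c ⟨hcC, hcd⟩
      by_contra hne2
      have hdc : ‖y - c‖ = t := by rw [← dist_eq_norm]; exact hcd
      have hdc₀ : ‖y - c₀‖ = t := by rw [← dist_eq_norm]; exact hc₀d.symm
      have hζ1 : ‖t⁻¹ • (y - c)‖ = 1 := by
        rw [norm_smul, Real.norm_eq_abs, abs_of_nonneg (by positivity), hdc]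
        field_simp
      have hζnc : t⁻¹ • (y - c) ∈ proxNC C c := by
        refine ⟨1/(2*t), by positivity, ?_⟩
        intro y' hy'C
        have h1 : t ≤ dist y y' := infDist_le_dist_of_mem hy'C
        rw [dist_eq_norm] at h1
        have hexp : ‖y - y'‖^2 = ‖y - c‖^2 - 2*⟪y - c, y' - c⟫ + ‖y' - c‖^2 := by
          have he : y - y' = (y - c) - (y' - c) := by abel
          rw [he, norm_sub_sq_real]
        have h2 : ⟪y - c, y' - c⟫ ≤ ‖y' - c‖^2 / 2 := by nlinarith [hdc]
        rw [real_inner_smul_left]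
        calc t⁻¹ * ⟪y - c, y' - c⟫ ≤ t⁻¹ * (‖y' - c‖^2/2) :=
              mul_le_mul_of_nonneg_left h2 (by positivity)
          _ = 1/(2*t) * ‖y' - c‖^2 := by ring
      have hPR := hprox c hcC _ hζnc hζ1 c₀ hc₀C
      have hcc : 0 < ‖c₀ - c‖ := by
        rw [norm_pos_iff, sub_ne_zero]
        exact fun h => hne2 h.symm
      have hhalfeq : ⟪y - c, c₀ - c⟫ = ‖c₀ - c‖^2 / 2 := by
        have hexp : ‖y - c₀‖^2 = ‖y - c‖^2 - 2*⟪y - c, c₀ - c⟫ + ‖c₀ - c‖^2 := by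
          have he : y - c₀ = (y - c) - (c₀ - c) := by abel
          rw [he, norm_sub_sq_real]
        nlinarith [hdc, hdc₀]
      rw [real_inner_smul_left, hhalfeq] at hPR
      have hrr : 1 / (2 * (η / Mψ)) = Mψ / (2 * η) := by field_simp
      rw [hrr] at hPR
      have hinv : (η/Mψ)⁻¹ < t⁻¹ := inv_strictAnti₀ htpos hy
      have hinv' : Mψ/η < t⁻¹ := by rwa [inv_div] at hinv
      have hApos : 0 < ‖c₀ - c‖^2 := pow_pos hcc 2
      have hmul := mul_lt_mul_of_pos_right hinv' (by positivity : (0:ℝ) < ‖c₀ - c‖^2/2)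
      have heq3 : Mψ/η * (‖c₀ - c‖^2/2) = Mψ/(2*η) * ‖c₀ - c‖^2 := by ring
      linarith
  -- epi-Lipschitz
  have hepi : ∀ x₀ ∈ C, EpiLipschitzAt C x₀ := by
    intro x₀ hx₀C
    have hx₀ : ψ x₀ ≤ 0 := hx₀C
    rcases lt_or_eq_of_le hx₀ with hlt | heq
    · -- interior case
      have hxint := hint x₀ (hCU hx₀C) hlt
      obtain ⟨ε, hεpos, hball⟩ := Metric.isOpen_iff.1 isOpen_interior x₀ hxint
      set d : EuclideanSpace ℝ (Fin n) := EuclideanSpace.single ⟨0, hn⟩ (1:ℝ) with hddef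
      have hd1 : ‖d‖ = 1 := by rw [hddef, EuclideanSpace.norm_single]; norm_num
      refine ⟨d, hd1, 0, fun _ => ⟪x₀, d⟫ - ε, ε, hεpos, LipschitzWith.const _, ?_⟩
      intro y hy
      constructor
      · intro _
        have h1 : |⟪y - x₀, d⟫| ≤ ‖y - x₀‖ := by
          have := abs_real_inner_le_norm (y - x₀) d
          rwa [hd1, mul_one] at this
        have h2 : ‖y - x₀‖ < ε := by rw [mem_ball, dist_eq_norm] at hy; exact hy
        have h3 : ⟪y, d⟫ = ⟪x₀, d⟫ + ⟪y - x₀, d⟫ := by rw [inner_sub_left]; ring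
        have h4 := abs_le.1 h1
        show ⟪x₀, d⟫ - ε ≤ ⟪y, d⟫
        linarith [h4.1]
      · intro _
        exact interior_subset (hball hy)
    · -- boundary case
      obtain ⟨d, hd1, ε₁, hε₁pos, hbU, hkey, hbnd⟩ := hbd x₀ heq
      set M := ‖ψ' x₀‖ + η with hMdef
      have hMpos : 0 < M := by
        have := norm_nonneg (ψ' x₀); rw [hMdef]; linarith
      set τ := ε₁/4 with hτdef
      have hτpos : 0 < τ := by rw [hτdef]; linarith
      set δ := min (ε₁/4) (η*τ/(2*M)) with hδdef
      have hδpos : 0 < δ := lt_min (by linarith) (by positivity)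
      have hδM : M * δ ≤ η*τ/2 := by
        have h := min_le_right (ε₁/4) (η*τ/(2*M))
        calc M * δ ≤ M * (η*τ/(2*M)) := mul_le_mul_of_nonneg_left h hMpos.le
          _ = η*τ/2 := by field_simp
      set t₀ := ⟪x₀, d⟫ with ht₀def
      set p := x₀ - t₀ • d with hpdef
      have hpd : ∀ (z : EuclideanSpace ℝ (Fin n)) (u : ℝ), z ∈ closedBall p δ →
          u ∈ Icc (t₀-τ) (t₀+τ) → z + u • d ∈ ball x₀ ε₁ := by
        intro z u hz hu
        rw [mem_ball, dist_eq_norm]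
        have hzp : ‖z - p‖ ≤ δ := by rw [mem_closedBall, dist_eq_norm] at hz; exact hz
        have he : z + u • d - x₀ = (z - p) + (u - t₀) • d := by
          rw [sub_smul, hpdef]; abel
        rw [he]
        have hδ4 : δ ≤ ε₁/4 := min_le_left _ _
        calc ‖(z - p) + (u - t₀) • d‖ ≤ ‖z - p‖ + ‖(u - t₀) • d‖ := norm_add_le _ _
          _ ≤ δ + τ := by
              rw [norm_smul, Real.norm_eq_abs, hd1, mul_one]
              have : |u - t₀| ≤ τ := abs_le.2 ⟨by linarith [hu.1], by linarith [hu.2]⟩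
              linarith
          _ < ε₁ := by rw [hτdef] at *; linarith
      have hψlip : ∀ a ∈ ball x₀ ε₁, ∀ b ∈ ball x₀ ε₁, |ψ a - ψ b| ≤ M * ‖a - b‖ := by
        intro a ha b hb
        have := Convex.norm_image_sub_le_of_norm_hasFDerivWithin_le
          (f := ψ) (f' := fun z => InnerProductSpace.toDual ℝ _ (ψ' z))
          (s := ball x₀ ε₁) (C := M)
          (fun z hz => ((hψd z (hbU hz)).hasFDerivAt.hasFDerivWithinAt))
          (fun z hz => by
            rw [LinearIsometryEquiv.norm_map]
            rw [hMdef]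
            exact hbnd z hz)
          (convex_ball x₀ ε₁) hb ha
        rwa [Real.norm_eq_abs] at this
      have hx₀eq : p + t₀ • d = x₀ := by rw [hpdef]; abel
      have hpmem : p ∈ closedBall p δ := mem_closedBall_self hδpos.le
      have hub : ψ (p + (t₀+τ) • d) ≤ -(η*τ) := by
        have h := hdec d x₀ ε₁ hbU hkey p t₀ (t₀+τ) (by linarith)
          (fun u hu => hpd p u hpmem ⟨by linarith [hu.1], by linarith [hu.2]⟩)
        rw [hx₀eq, heq] at h
        linarith
      have hlb : η*τ ≤ ψ (p + (t₀-τ) • d) := by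
        have h := hdec d x₀ ε₁ hbU hkey p (t₀-τ) t₀ (by linarith)
          (fun u hu => hpd p u hpmem ⟨by linarith [hu.1], by linarith [hu.2]⟩)
        rw [hx₀eq, heq] at h
        linarith
      have hex : ∀ z ∈ closedBall p δ, ∃ t, t ∈ Icc (t₀-τ) (t₀+τ) ∧ ψ (z + t • d) = 0 := by
        intro z hz
        have hzp : ‖z - p‖ ≤ δ := by rw [mem_closedBall, dist_eq_norm] at hz; exact hz
        have hcont' : ContinuousOn (fun t : ℝ => ψ (z + t • d)) (Icc (t₀-τ) (t₀+τ)) :=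
          fun t ht => ((stmt1_line_deriv
            (hψd _ (hbU (hpd z t hz ht)))).continuousAt).continuousWithinAt
        have hMz : M * ‖z - p‖ ≤ η*τ/2 :=
          le_trans (mul_le_mul_of_nonneg_left hzp hMpos.le) hδM
        have hfa : η*τ/2 ≤ ψ (z + (t₀-τ) • d) := by
          have h1 := hψlip _ (hpd z (t₀-τ) hz ⟨le_refl _, by linarith⟩)
            _ (hpd p (t₀-τ) hpmem ⟨le_refl _, by linarith⟩)
          have h2 : z + (t₀-τ) • d - (p + (t₀-τ) • d) = z - p := by abel
          rw [h2] at h1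
          have h4 := abs_le.1 h1
          nlinarith [h4.1, hlb, hMz]
        have hfb : ψ (z + (t₀+τ) • d) ≤ -(η*τ/2) := by
          have h1 := hψlip _ (hpd z (t₀+τ) hz ⟨by linarith, le_refl _⟩)
            _ (hpd p (t₀+τ) hpmem ⟨by linarith, le_refl _⟩)
          have h2 : z + (t₀+τ) • d - (p + (t₀+τ) • d) = z - p := by abel
          rw [h2] at h1
          have h4 := abs_le.1 h1
          nlinarith [h4.2, hub, hMz]
        have h0 : (0:ℝ) ∈ Icc (ψ (z + (t₀+τ) • d)) (ψ (z + (t₀-τ) • d)) := by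
          constructor
          · nlinarith
          · nlinarith
        obtain ⟨t, htI, ht0⟩ := intermediate_value_Icc' (by linarith) hcont' h0
        exact ⟨t, htI, ht0⟩
      choose! g₀ hg₀I hg₀0 using hex
      have hmono : ∀ z ∈ closedBall p δ, ∀ a b : ℝ, t₀-τ ≤ a → a ≤ b → b ≤ t₀+τ →
          ψ (z + b • d) ≤ ψ (z + a • d) - η*(b-a) :=
        fun z hz a b ha hab hb => hdec d x₀ ε₁ hbU hkey z a b hab
          (fun u hu => hpd z u hz ⟨by linarith [hu.1], by linarith [hu.2]⟩)
      have hside : ∀ z ∈ closedBall p δ, ∀ z' ∈ closedBall p δ,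
          g₀ z - g₀ z' ≤ (M/η) * ‖z - z'‖ := by
        intro z hz z' hz'
        by_cases h : g₀ z ≤ g₀ z'
        · have : (0:ℝ) ≤ (M/η) * ‖z - z'‖ := by positivity
          linarith
        · push_neg at h
          have hIz := hg₀I z hz
          have hIz' := hg₀I z' hz'
          have h1 := hmono z' hz' (g₀ z') (g₀ z) hIz'.1 h.le hIz.2
          rw [hg₀0 z' hz'] at h1
          have h2 := hψlip _ (hpd z (g₀ z) hz hIz) _ (hpd z' (g₀ z) hz' hIz)
          have h3 : z + g₀ z • d - (z' + g₀ z • d) = z - z' := by abel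
          rw [h3, hg₀0 z hz] at h2
          have h4 := abs_le.1 h2
          rw [div_mul_eq_mul_div, le_div_iff₀ hη]
          nlinarith [h4.1]
      have hlipOn : LipschitzOnWith (Real.toNNReal (M/η)) g₀ (closedBall p δ) := by
        rw [lipschitzOnWith_iff_dist_le_mul]
        intro z hz z' hz'
        rw [Real.coe_toNNReal _ (by positivity), Real.dist_eq, dist_eq_norm]
        refine abs_sub_le_iff.2 ⟨hside z hz z' hz', ?_⟩
        rw [norm_sub_rev]
        exact hside z' hz' z hz
      obtain ⟨g, hglip, hgeq⟩ := hlipOn.extend_real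
      refine ⟨d, hd1, Real.toNNReal (M/η), g, min δ τ, lt_min hδpos hτpos, hglip, ?_⟩
      intro y hy
      have hyb : ‖y - x₀‖ < min δ τ := by rw [mem_ball, dist_eq_norm] at hy; exact hy
      set t := ⟪y, d⟫ with htdef'
      set z := y - t • d with hzdef
      have hzmem : z ∈ closedBall p δ := by
        rw [mem_closedBall, dist_eq_norm]
        have hzp : z - p = (y - x₀) - ⟪y - x₀, d⟫ • d := by
          rw [hzdef, hpdef, htdef', ht₀def, inner_sub_left, sub_smul]
          abel
        rw [hzp]
        have h5 := stmt1_proj_le hd1 (v := y - x₀)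
        have h6 := min_le_left δ τ
        linarith [lt_of_le_of_lt h5 hyb]
      have hyeq : y = z + t • d := by rw [hzdef]; abel
      have htI : t₀ - τ < t ∧ t < t₀ + τ := by
        have h1 : |t - t₀| ≤ ‖y - x₀‖ := by
          have he : t - t₀ = ⟪y - x₀, d⟫ := by rw [htdef', ht₀def, inner_sub_left]
          rw [he]
          have := abs_real_inner_le_norm (y - x₀) d
          rwa [hd1, mul_one] at this
        have h2 := abs_lt.1 (lt_of_le_of_lt h1 (lt_of_lt_of_le hyb (min_le_right δ τ)))
        exact ⟨by linarith [h2.1], by linarith [h2.2]⟩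
      have hgz : g z = g₀ z := (hgeq hzmem).symm
      have hroot := hg₀0 z hzmem
      have hrootI := hg₀I z hzmem
      rw [hgz]
      constructor
      · intro hyC2
        by_contra hgt
        push_neg at hgt
        have h1 := hmono z hzmem t (g₀ z) (by linarith [htI.1]) hgt.le hrootI.2
        rw [hroot, ← hyeq] at h1
        have hψy : ψ y ≤ 0 := hyC2
        nlinarith
      · intro hle
        show ψ y ≤ 0
        have h1 := hmono z hzmem (g₀ z) t hrootI.1 hle (by linarith [htI.2])
        rw [hroot, ← hyeq] at h1
        nlinarith
  exact ⟨hne, hcpt, hclint, hepi, hprox, hnear⟩
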